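/- For integers n and k of different parity with n − 2 > k > 2, the graph G_{n,k} satisfies |DJ(G_{n,k})| = (n/2)·C(k+2,3), where C(k+2,3) is the binomial coefficient. -/

import Mathlib

open scoped Classical

noncomputable section

abbrev Pt : Type := EuclideanSpace ℝ (Fin 2)

instance : Fact (Module.finrank ℝ Pt = 2) := ⟨finrank_euclideanSpace_fin⟩

noncomputable instance : Module.Oriented ℝ Pt (Fin 2) :=
  ⟨(EuclideanSpace.basisFun (Fin 2) ℝ).toBasis.orientation⟩

/-- A (combinatorial datum of a) geometric graph: a finite set of vertices (points of the
plane) together with a finite set of edges (unordered pairs of points). -/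
structure GeomGraph where
  verts : Finset Pt
  edges : Finset (Sym2 Pt)

/-- `G` is a geometric graph: edges are non-degenerate pairs of vertices, and the vertices
are in general position (no three collinear). -/
def GeomGraph.IsGeometric (G : GeomGraph) : Prop :=
  (∀ e ∈ G.edges, ¬ e.IsDiag ∧ ∀ p ∈ e, p ∈ G.verts) ∧
  ∀ p ∈ G.verts, ∀ q ∈ G.verts, ∀ r ∈ G.verts,
    p ≠ q → p ≠ r → q ≠ r → ¬ Collinear ℝ ({p, q, r} : Set Pt)

/-- The closed straight-line segment realizing an edge. -/
def edgeSeg (e : Sym2 Pt) : Set Pt :=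
  Sym2.lift ⟨fun u v => segment ℝ u v, fun u v => segment_symm ℝ u v⟩ e

/-- Two edges are disjoint if their closed segments do not intersect. -/
def EdgesDisjoint (e f : Sym2 Pt) : Prop := edgeSeg e ∩ edgeSeg f = ∅

/-- `DJedge G e` is the set of edges of `G` disjoint from `e`. -/
def DJedge (G : GeomGraph) (e : Sym2 Pt) : Finset (Sym2 Pt) :=
  G.edges.filter (fun f => EdgesDisjoint e f)

/-- `DJpairs G` is the set of unordered pairs of disjoint edges of `G`. -/
def DJpairs (G : GeomGraph) : Finset (Sym2 (Sym2 Pt)) :=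
  G.edges.sym2.filter (fun pr => ∃ e f, pr = s(e, f) ∧ EdgesDisjoint e f)

/-- The neighborhood of a vertex. -/
def nbhd (G : GeomGraph) (v : Pt) : Finset Pt :=
  G.verts.filter (fun w => s(v, w) ∈ G.edges)

/-- The degree of a vertex. -/
def deg (G : GeomGraph) (v : Pt) : ℕ := (nbhd G v).card

/-- A geometric graph is locally convex if every vertex lies outside the convex hull of
its neighborhood. -/
def GeomGraph.LocallyConvex (G : GeomGraph) : Prop :=
  ∀ v ∈ G.verts, v ∉ convexHull ℝ (nbhd G v : Set Pt)

/-- The oriented angle `∠ x y z ∈ (-π, π]`, measured counterclockwise from the ray `yx`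
to the ray `yz`. -/
def oangle (x y z : Pt) : ℝ := (EuclideanGeometry.oangle x y z).toReal


/-- The `i`-th vertex of a regular `n`-gon inscribed in the unit circle. -/
def gonPt (n : ℕ) (i : ℕ) : Pt :=
  (WithLp.equiv 2 (Fin 2 → ℝ)).symm
    ![Real.cos (2 * Real.pi * i / n), Real.sin (2 * Real.pi * i / n)]

/-- The convex geometric graph `G_{n,k}`: its vertices `x_0, …, x_{n-1}` are the vertices of
a regular `n`-gon in cyclic order, and its edges are the pairs `x_i x_j` with
`j - i ≡ d (mod n)` for some `d ∈ {(n-k-1)/2, …, (n+k+1)/2}`. -/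
def Gnk (n k : ℕ) : GeomGraph where
  verts := (Finset.range n).image (gonPt n)
  edges := (((Finset.range n) ×ˢ (Finset.range n)).filter
      (fun p => (n - k - 1) / 2 ≤ (p.2 + n - p.1) % n ∧
        (p.2 + n - p.1) % n ≤ (n + k + 1) / 2)).image
      (fun p => s(gonPt n p.1, gonPt n p.2))

namespace GnkAux
open Real Finset




/-- point on unit circle at angle θ -/
def P (θ : ℝ) : Pt := (WithLp.equiv 2 (Fin 2 → ℝ)).symm ![Real.cos θ, Real.sin θ]

@[simp] lemma P_apply0 (θ : ℝ) : P θ 0 = Real.cos θ := by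
  simp [P, WithLp.equiv_symm_apply, PiLp.toLp_apply]
@[simp] lemma P_apply1 (θ : ℝ) : P θ 1 = Real.sin θ := by
  simp [P, WithLp.equiv_symm_apply, PiLp.toLp_apply]

/-- linear functional -/
def F (μ : ℝ) (x : Pt) : ℝ := Real.cos μ * x 0 + Real.sin μ * x 1

lemma F_P (μ θ : ℝ) : F μ (P θ) = Real.cos (θ - μ) := by
  simp [F, Real.cos_sub]; ring

lemma F_combo (μ a b : ℝ) (u v : Pt) : F μ (a • u + b • v) = a * F μ u + b * F μ v := by
  simp [F, PiLp.add_apply, PiLp.smul_apply, smul_eq_mul]; ring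

lemma mem_segment_iff {x u v : Pt} : x ∈ segment ℝ u v ↔
    ∃ a b : ℝ, 0 ≤ a ∧ 0 ≤ b ∧ a + b = 1 ∧ a • u + b • v = x := by
  constructor
  · rintro ⟨a, b, ha, hb, hab, rfl⟩; exact ⟨a, b, ha, hb, hab, rfl⟩
  · rintro ⟨a, b, ha, hb, hab, rfl⟩; exact ⟨a, b, ha, hb, hab, rfl⟩

lemma cos_lt_of_between {δ0 x : ℝ} (h1 : -δ0 < x) (h2 : x < δ0) (h3 : δ0 ≤ π) :
    Real.cos δ0 < Real.cos x := by
  have : |x| < δ0 := abs_lt.2 ⟨h1, h2⟩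
  calc Real.cos δ0 < Real.cos |x| :=
        Real.cos_lt_cos_of_nonneg_of_le_pi (abs_nonneg x) h3 this
    _ = Real.cos x := Real.cos_abs x

lemma cos_lt_of_outside {δ0 x : ℝ} (h1 : δ0 < x) (h2 : x < 2 * π - δ0) (h0 : 0 < δ0)
    (h3 : δ0 ≤ π) : Real.cos x < Real.cos δ0 := by
  rcases le_or_gt x π with hx | hx
  · exact Real.cos_lt_cos_of_nonneg_of_le_pi h0.le hx h1
  · have hc : Real.cos x = Real.cos (2 * π - x) := by
      rw [Real.cos_sub]; simp [Real.cos_two_pi, Real.sin_two_pi]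
    rw [hc]
    apply Real.cos_lt_cos_of_nonneg_of_le_pi h0.le
    · linarith [Real.pi_pos]
    · linarith

/-- points strictly inside the arc give F-value above the chord value -/
lemma F_seg_const {α β : ℝ} (hab : α < β) (h2π : β < α + 2 * π) {x : Pt}
    (hx : x ∈ segment ℝ (P α) (P β)) : F ((α + β) / 2) x = Real.cos ((β - α) / 2) := by
  obtain ⟨a, b, _, _, hab1, rfl⟩ := mem_segment_iff.1 hx
  rw [F_combo, F_P, F_P]
  have h1 : α - (α + β) / 2 = -((β - α) / 2) := by ring
  have h2 : β - (α + β) / 2 = (β - α) / 2 := by ring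
  rw [h1, h2, Real.cos_neg, ← add_mul, hab1, one_mul]

lemma F_seg_gt {α β γ δ : ℝ} (h1 : α < γ) (h2 : γ ≤ δ) (h3 : δ < β) (h4 : β < α + 2 * π)
    {x : Pt} (hx : x ∈ segment ℝ (P γ) (P δ)) :
    Real.cos ((β - α) / 2) < F ((α + β) / 2) x := by
  set μ := (α + β) / 2
  set δ0 := (β - α) / 2 with hδ0
  have hδ0pos : 0 < δ0 := by simp [hδ0]; linarith
  have hδ0pi : δ0 ≤ π := by simp [hδ0]; linarith [Real.pi_pos]
  have hγ : Real.cos δ0 < Real.cos (γ - μ) := by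
    apply cos_lt_of_between _ _ hδ0pi <;> simp [hδ0, μ] <;> linarith
  have hδ : Real.cos δ0 < Real.cos (δ - μ) := by
    apply cos_lt_of_between _ _ hδ0pi <;> simp [hδ0, μ] <;> linarith
  obtain ⟨a, b, ha, hb, hab1, rfl⟩ := mem_segment_iff.1 hx
  rw [F_combo, F_P, F_P]
  rcases eq_or_lt_of_le ha with h | h
  · have hb1 : b = 1 := by linarith
    rw [← h, hb1]; simpa using hδ
  · have key : a * Real.cos δ0 + b * Real.cos δ0 = Real.cos δ0 := by
      rw [← add_mul, hab1, one_mul]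
    nlinarith [mul_le_mul_of_nonneg_left hδ.le hb, mul_lt_mul_of_pos_left hγ h]

/-- Lemma A: nested arcs give disjoint segments. -/
lemma disjoint_of_nested {α β γ δ : ℝ} (h1 : α < γ) (h2 : γ ≤ δ) (h3 : δ < β)
    (h4 : β < α + 2 * π) :
    segment ℝ (P α) (P β) ∩ segment ℝ (P γ) (P δ) = ∅ := by
  rw [Set.eq_empty_iff_forall_notMem]
  rintro x ⟨hx1, hx2⟩
  have e1 := F_seg_const (by linarith) h4 hx1
  have e2 := F_seg_gt h1 h2 h3 h4 hx2
  linarith [e1, e2]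



lemma cos_sin_eq_false {α β : ℝ} (h1 : α < β) (h2 : β < α + 2 * π)
    (hc : Real.cos α = Real.cos β) (hs : Real.sin α = Real.sin β) : False := by
  have h3 : Real.cos (β - α) = 1 := by
    rw [Real.cos_sub, ← hc, ← hs]
    nlinarith [Real.sin_sq_add_cos_sq α]
  obtain ⟨z, hz⟩ := (Real.cos_eq_one_iff _).1 h3
  have hπ := Real.pi_pos
  have hz0 : (0:ℝ) < (z:ℝ) := by nlinarith
  have hz1 : (z:ℝ) < 1 := by nlinarith
  have h4 : (0:ℤ) < z := by exact_mod_cast hz0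
  have h5 : z < (1:ℤ) := by exact_mod_cast hz1
  omega

set_option maxHeartbeats 1000000 in
lemma inter_nonempty_of_crossing {α γ β δ : ℝ} (h1 : α < γ) (h2 : γ < β) (h3 : β < δ)
    (h4 : δ < α + 2 * π) :
    (segment ℝ (P α) (P β) ∩ segment ℝ (P γ) (P δ)).Nonempty := by
  have hπ := Real.pi_pos
  set μ := (α + β) / 2 with hμ
  set δ0 := (β - α) / 2 with hδ0
  have hδ0pos : 0 < δ0 := by rw [hδ0]; linarith
  have hδ0pi : δ0 ≤ π := by rw [hδ0]; linarith
  set c := Real.cos δ0 with hc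
  have hA : c < Real.cos (γ - μ) := by
    apply cos_lt_of_between _ _ hδ0pi <;> rw [hδ0, hμ] <;> push_cast <;> ring_nf <;> linarith
  have hB : Real.cos (δ - μ) < c := by
    apply cos_lt_of_outside _ _ hδ0pos hδ0pi <;> rw [hδ0, hμ] <;> ring_nf <;> linarith
  set A := Real.cos (γ - μ)
  set B := Real.cos (δ - μ)
  have hABpos : 0 < A - B := by linarith
  set t := (A - c) / (A - B) with ht
  have ht0 : 0 ≤ t := div_nonneg (by linarith) hABpos.le
  have ht1 : t ≤ 1 := by
    rw [ht, div_le_one hABpos]; linarith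
  set z := (1 - t) • P γ + t • P δ with hzdef
  have hz2 : z ∈ segment ℝ (P γ) (P δ) := ⟨1 - t, t, by linarith, ht0, by ring, rfl⟩
  have hFz : Real.cos μ * z 0 + Real.sin μ * z 1 = c := by
    have : F μ z = (1 - t) * A + t * B := by rw [hzdef, F_combo, F_P, F_P]
    have h' : (1 - t) * A + t * B = c := by
      rw [ht]; field_simp; ring
    simpa [F, h'] using this
  -- linear algebra: z is on the line through P α and P β
  have FPa : Real.cos μ * (P α 0) + Real.sin μ * (P α 1) = c := by
    have := F_P μ α
    have h' : α - μ = -δ0 := by rw [hμ, hδ0]; ring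
    simpa [F, h', Real.cos_neg, ← hc] using this
  have FPb : Real.cos μ * (P β 0) + Real.sin μ * (P β 1) = c := by
    have := F_P μ β
    have h' : β - μ = δ0 := by rw [hμ, hδ0]; ring
    simpa [F, h', ← hc] using this
  set v0 := z 0 - P α 0 with hv0d
  set v1 := z 1 - P α 1 with hv1d
  set w0 := P β 0 - P α 0 with hw0d
  set w1 := P β 1 - P α 1 with hw1d
  have eq1 : Real.cos μ * v0 + Real.sin μ * v1 = 0 := by
    rw [hv0d, hv1d]; linear_combination hFz - FPa
  have eq2 : Real.cos μ * w0 + Real.sin μ * w1 = 0 := by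
    rw [hw0d, hw1d]; linear_combination FPb - FPa
  have eq3 : Real.sin μ ^ 2 + Real.cos μ ^ 2 = 1 := Real.sin_sq_add_cos_sq μ
  have det : v0 * w1 - v1 * w0 = 0 := by
    linear_combination (Real.cos μ * w1 - Real.sin μ * w0) * eq1 +
      (Real.sin μ * v0 - Real.cos μ * v1) * eq2 - (v0 * w1 - v1 * w0) * eq3
  have hwne : ¬ (w0 = 0 ∧ w1 = 0) := by
    rintro ⟨e0, e1⟩
    rw [hw0d] at e0; rw [hw1d] at e1
    simp only [P_apply0, P_apply1] at e0 e1
    exact cos_sin_eq_false (show α < β by linarith) (by linarith)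
      (by linarith) (by linarith)
  -- obtain scalar s with v = s • w
  obtain ⟨s, hs0, hs1⟩ : ∃ s : ℝ, v0 = s * w0 ∧ v1 = s * w1 := by
    rcases eq_or_ne w0 0 with h0 | h0
    · have h1 : w1 ≠ 0 := fun h1 => hwne ⟨h0, h1⟩
      refine ⟨v1 / w1, ?_, by field_simp⟩
      have : v0 * w1 = 0 := by rw [h0] at det; linarith
      have hv0 : v0 = 0 := by
        rcases mul_eq_zero.1 this with h | h
        · exact h
        · exact absurd h h1
      rw [hv0, h0]; ring
    · refine ⟨v0 / w0, by field_simp, ?_⟩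
      field_simp
      linarith [det]
  -- second functional
  set μ' := (γ + δ) / 2 with hμ'
  set δ0' := (δ - γ) / 2 with hδ0'
  have hδ0'pos : 0 < δ0' := by rw [hδ0']; linarith
  have hδ0'pi : δ0' ≤ π := by rw [hδ0']; linarith
  set c' := Real.cos δ0' with hc'
  have hGz : Real.cos μ' * z 0 + Real.sin μ' * z 1 = c' := by
    have := F_seg_const (show γ < δ by linarith) (show δ < γ + 2 * π by linarith) hz2
    simpa [F, hμ', hδ0', ← hc'] using this
  have hGb : c' < Real.cos μ' * (P β 0) + Real.sin μ' * (P β 1) := by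
    have h' := F_P μ' β
    have : c' < Real.cos (β - μ') := by
      apply cos_lt_of_between _ _ hδ0'pi <;> rw [hδ0', hμ'] <;> linarith
    rw [F] at h'
    rw [h']
    exact this
  have hGa : Real.cos μ' * (P α 0) + Real.sin μ' * (P α 1) < c' := by
    have h' := F_P μ' α
    have hev : Real.cos (α - μ') = Real.cos (μ' - α) := by
      rw [← Real.cos_neg (α - μ')]; ring_nf
    have : Real.cos (μ' - α) < c' := by
      apply cos_lt_of_outside _ _ hδ0'pos hδ0'pi <;> rw [hδ0', hμ'] <;> linarith
    rw [F] at h'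
    rw [h', hev]
    exact this
  set Ga := Real.cos μ' * (P α 0) + Real.sin μ' * (P α 1) with hGad
  set Gb := Real.cos μ' * (P β 0) + Real.sin μ' * (P β 1) with hGbd
  have E : Ga + s * (Gb - Ga) = c' := by
    rw [hGad, hGbd]
    have hv0' : z 0 - P α 0 = s * (P β 0 - P α 0) := by rw [← hv0d, ← hw0d]; exact hs0
    have hv1' : z 1 - P α 1 = s * (P β 1 - P α 1) := by rw [← hv1d, ← hw1d]; exact hs1
    linear_combination hGz - Real.cos μ' * hv0' - Real.sin μ' * hv1'
  have hs0' : 0 ≤ s := by nlinarith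
  have hs1' : s ≤ 1 := by nlinarith
  refine ⟨z, ?_, hz2⟩
  refine ⟨1 - s, s, by linarith, hs0', by ring, ?_⟩
  apply (WithLp.equiv 2 (Fin 2 → ℝ)).injective
  funext i
  have hz0 : z 0 = (1 - s) * P α 0 + s * P β 0 := by
    have : v0 = s * w0 := hs0
    rw [hv0d, hw0d] at this; linarith
  have hz1 : z 1 = (1 - s) * P α 1 + s * P β 1 := by
    have : v1 = s * w1 := hs1
    rw [hv1d, hw1d] at this; linarith
  fin_cases i <;>
    simp only [WithLp.equiv_apply, WithLp.ofLp_add, WithLp.ofLp_smul, Pi.add_apply, Pi.smul_apply, smul_eq_mul] <;>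
    [exact hz0.symm; exact hz1.symm]



lemma gonPt_eq_P (n i : ℕ) : gonPt n i = P (2 * π * i / n) := rfl

variable {n : ℕ}

lemma angle_lt (hn : 0 < n) {x y : ℕ} (h : x < y) :
    2 * π * x / n < 2 * π * y / n := by
  have hπ := Real.pi_pos
  have hn' : (0:ℝ) < n := by exact_mod_cast hn
  have hxy : (x:ℝ) < y := by exact_mod_cast h
  rw [div_lt_div_iff₀ hn' hn']
  nlinarith [mul_pos (mul_pos hπ (sub_pos.mpr hxy)) hn']

lemma angle_lt2 (hn : 0 < n) {x y : ℕ} (h : y < x + n) :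
    2 * π * y / n < 2 * π * x / n + 2 * π := by
  have hπ := Real.pi_pos
  have hn' : (0:ℝ) < n := by exact_mod_cast hn
  have h' : (y:ℝ) < x + n := by exact_mod_cast h
  have heq : 2 * π * (x:ℝ) / n + 2 * π = 2 * π * ((x:ℝ) + n) / n := by
    field_simp
  rw [heq, div_lt_div_iff₀ hn' hn']
  nlinarith [mul_pos (mul_pos hπ (show (0:ℝ) < (x:ℝ) + n - y by linarith)) hn']

lemma gonPt_mod (hn : 0 < n) (x : ℕ) : gonPt n x = gonPt n (x % n) := by
  have hn' : (n:ℝ) ≠ 0 := by positivity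
  have hx : (x:ℝ) = ((x % n : ℕ) : ℝ) + ((x / n : ℕ) : ℝ) * n := by
    have h := Nat.mod_add_div x n
    calc (x:ℝ) = ((x % n + n * (x / n) : ℕ) : ℝ) := by rw [h]
      _ = _ := by push_cast; ring
  have hang : 2 * π * x / n = 2 * π * (x % n : ℕ) / n + (x / n : ℕ) * (2 * π) := by
    rw [hx]; field_simp
  apply (WithLp.equiv 2 (Fin 2 → ℝ)).injective
  funext i
  fin_cases i <;> simp only [gonPt, WithLp.equiv_apply, Equiv.apply_symm_apply] <;>
    simp [hang, Real.cos_add_nat_mul_two_pi, Real.sin_add_nat_mul_two_pi]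

lemma gonPt_congr (hn : 0 < n) {x y : ℕ} (h : x ≡ y [MOD n]) :
    gonPt n x = gonPt n y := by
  rw [gonPt_mod hn x, gonPt_mod hn y, h]

lemma gonPt_eq_iff (hn : 0 < n) {x y : ℕ} :
    gonPt n x = gonPt n y ↔ ((x : ZMod n) = (y : ZMod n)) := by
  constructor
  · intro h
    have hπ := Real.pi_pos
    have hn' : (0:ℝ) < n := by exact_mod_cast hn
    have h0 : Real.cos (2*π*x/n) = Real.cos (2*π*y/n) := by
      have := congrArg (fun p : Pt => p 0) h
      simpa [gonPt, WithLp.equiv_symm_apply, PiLp.toLp_apply] using this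
    have h1 : Real.sin (2*π*x/n) = Real.sin (2*π*y/n) := by
      have := congrArg (fun p : Pt => p 1) h
      simpa [gonPt, WithLp.equiv_symm_apply, PiLp.toLp_apply] using this
    have hone : Real.cos (2*π*y/n - 2*π*x/n) = 1 := by
      rw [Real.cos_sub, ← h0, ← h1]
      nlinarith [Real.sin_sq_add_cos_sq (2*π*x/n)]
    obtain ⟨z, hz⟩ := (Real.cos_eq_one_iff _).1 hone
    have hzn : (z:ℝ) * n = (y:ℝ) - x := by
      have h2 : (2*π) * ((z:ℝ) * n) = (2*π) * ((y:ℝ) - x) := by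
        field_simp at hz
        nlinarith [hz]
      have h2π : (2*π) ≠ 0 := by positivity
      exact mul_left_cancel₀ h2π h2
    have h3 : (y:ℤ) = x + z * n := by
      have : (z:ℝ) * n = ((y:ℤ) - (x:ℤ) : ℤ) := by push_cast; linarith
      have h4 : ((z * n : ℤ) : ℝ) = ((y - x : ℤ) : ℝ) := by push_cast; linarith
      have h5 : (z * n : ℤ) = (y:ℤ) - x := by exact_mod_cast h4
      omega
    have h6 : ((y:ℤ) : ZMod n) = ((x:ℤ) : ZMod n) := by
      rw [h3]; push_cast [ZMod.natCast_self]; ring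
    exact_mod_cast h6.symm
  · intro h
    exact gonPt_congr hn ((ZMod.natCast_eq_natCast_iff _ _ _).1 h)

lemma zeq (hn : 0 < n) {x y : ℕ} (hx : x < n) (hy : y < n)
    (h : (x : ZMod n) = (y : ZMod n)) : x = y := by
  haveI : NeZero n := ⟨hn.ne'⟩
  have := congrArg ZMod.val h
  rwa [ZMod.val_cast_of_lt hx, ZMod.val_cast_of_lt hy] at this

lemma zdvd (hn : 0 < n) {x : ℕ} (h : (x : ZMod n) = 0) : n ∣ x := by
  haveI : NeZero n := ⟨hn.ne'⟩
  exact (ZMod.natCast_eq_zero_iff x n).1 h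



lemma pairs_card (z : ℕ) :
    (((range z) ×ˢ (range z)).filter (fun q : ℕ × ℕ => q.1 < q.2)).card = z.choose 2 := by
  have H : ∀ q ∈ ((range z) ×ˢ (range z)).filter (fun q : ℕ × ℕ => q.1 < q.2),
      q.2 ∈ range z := by
    intro q hq; simp only [mem_filter, mem_product] at hq; exact hq.1.2
  rw [Finset.card_eq_sum_card_fiberwise H]
  have fib : ∀ y ∈ range z,
      ((((range z) ×ˢ (range z)).filter (fun q : ℕ × ℕ => q.1 < q.2)).filter
        (fun q => q.2 = y)) = (range y).image (fun x => (x, y)) := by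
    intro y hy
    simp only [mem_range] at hy
    ext ⟨x2, y2⟩
    simp only [mem_filter, mem_product, mem_range, mem_image, Prod.mk.injEq]
    constructor
    · rintro ⟨⟨⟨h1, h2⟩, h3⟩, h4⟩; exact ⟨x2, by omega, rfl, h4.symm⟩
    · rintro ⟨x, hx, rfl, rfl⟩; omega
  rw [Finset.sum_congr rfl fun y hy => by rw [fib y hy, Finset.card_image_of_injective _
      (fun a b h => by simpa using (Prod.ext_iff.1 h).1), Finset.card_range]]
  have := Finset.sum_range_id_mul_two z
  rw [Nat.choose_two_right]
  omega

lemma sum_choose_shift (m t : ℕ) :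
    ∑ d ∈ Finset.Icc m (m + t), (d - m).choose 2 = (t + 1).choose 3 := by
  have h1 : Finset.Icc m (m + t) = (Finset.Icc 0 t).map (addLeftEmbedding m) := by
    rw [Finset.map_add_left_Icc]; norm_num
  rw [h1, Finset.sum_map]
  have h2 : ∀ j ∈ Finset.Icc 0 t, ((addLeftEmbedding m) j - m).choose 2 = j.choose 2 := by
    intro j _; simp [addLeftEmbedding_apply]
  rw [Finset.sum_congr rfl h2]
  have h3 : ∑ j ∈ Finset.Icc 0 t, j.choose 2 = ∑ j ∈ Finset.Icc 2 t, j.choose 2 := by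
    rcases le_or_gt 2 t with ht | ht
    · apply (Finset.sum_subset (fun x hx => by simp at *; omega) ?_).symm
      intro x hx1 hx2
      simp only [Finset.mem_Icc] at hx1 hx2
      have : x < 2 := by omega
      interval_cases x <;> simp
    · interval_cases t <;> simp <;> intro x hx <;> interval_cases x <;> simp
  rw [h3, Nat.sum_Icc_choose]



/-- inner index triples (u,v,d) -/
def TT (n m : ℕ) : Finset (ℕ × ℕ × ℕ) :=
  (Finset.Icc m (n - m)).biUnion (fun d =>
    (((range (d - m)) ×ˢ (range (d - m))).filter (fun q : ℕ × ℕ => q.1 < q.2)).image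
      (fun q => (q.1 + 1, q.2 + m, d)))

lemma mem_TT {n m u v d : ℕ} (hm : 1 ≤ m) :
    (u, v, d) ∈ TT n m ↔
      m ≤ d ∧ d ≤ n - m ∧ 1 ≤ u ∧ u < v ∧ v + 1 ≤ d ∧ m ≤ v - u := by
  simp only [TT, mem_biUnion, mem_image, mem_filter, mem_product, mem_range, Finset.mem_Icc]
  constructor
  · rintro ⟨d', ⟨hd1, hd2⟩, ⟨x, y⟩, ⟨⟨hx, hy⟩, hxy⟩, heq⟩
    simp only [Prod.mk.injEq] at heq
    omega
  · rintro ⟨h1, h2, h3, h4, h5, h6⟩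
    exact ⟨d, ⟨h1, h2⟩, ⟨u - 1, v - m⟩, ⟨⟨by omega, by omega⟩, by omega⟩,
      by simp only [Prod.mk.injEq]; exact ⟨by omega, by omega, trivial⟩⟩

lemma card_TT {n m : ℕ} (hmn : m + m ≤ n) :
    (TT n m).card = (n - 2 * m + 1).choose 3 := by
  rw [TT, Finset.card_biUnion]
  · have : ∀ d ∈ Finset.Icc m (n - m),
        ((((range (d - m)) ×ˢ (range (d - m))).filter (fun q : ℕ × ℕ => q.1 < q.2)).image
          (fun q => (q.1 + 1, q.2 + m, d))).card = (d - m).choose 2 := by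
      intro d _
      rw [Finset.card_image_of_injective _ ?_, pairs_card]
      intro a b h
      simp only [Prod.mk.injEq] at h
      exact Prod.ext (by omega) (by omega)
    rw [Finset.sum_congr rfl this]
    have h2 : n - m = m + (n - 2 * m) := by omega
    rw [h2, sum_choose_shift]
  · intro d1 h1 d2 h2 hne
    simp only [Finset.disjoint_left]
    rintro x hx1 hx2
    simp only [mem_image] at hx1 hx2
    obtain ⟨q1, _, rfl⟩ := hx1
    obtain ⟨q2, _, heq⟩ := hx2
    apply hne
    have := congrArg (fun p : ℕ × ℕ × ℕ => p.2.2) heq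
    simpa using this.symm

/-- quadruples (a,u,v,d) -/
def SS (n m : ℕ) : Finset (ℕ × ℕ × ℕ × ℕ) := (range n) ×ˢ TT n m

lemma mem_SS {n m a u v d : ℕ} (hm : 1 ≤ m) :
    (a, u, v, d) ∈ SS n m ↔
      a < n ∧ m ≤ d ∧ d ≤ n - m ∧ 1 ≤ u ∧ u < v ∧ v + 1 ≤ d ∧ m ≤ v - u := by
  rw [SS, mem_product, mem_range]
  simp only [mem_TT hm]

lemma card_SS {n m : ℕ} (hmn : m + m ≤ n) :
    (SS n m).card = n * (n - 2 * m + 1).choose 3 := by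
  rw [SS, Finset.card_product, card_TT hmn, Finset.card_range]



variable {n : ℕ}

lemma edgeSeg_mk (u v : Pt) : edgeSeg s(u, v) = segment ℝ u v := rfl

lemma not_disjoint_of_mem {e f : Sym2 Pt} {p : Pt} (he : p ∈ edgeSeg e)
    (hf : p ∈ edgeSeg f) : ¬ EdgesDisjoint e f := by
  intro h
  exact (Set.eq_empty_iff_forall_notMem.1 h p) ⟨he, hf⟩

lemma zmod_mod (a : ℕ) : ((a % n : ℕ) : ZMod n) = (a : ZMod n) := by
  conv_rhs => rw [← Nat.mod_add_div a n]
  push_cast [ZMod.natCast_self]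
  ring

lemma zsub {w : ℕ} (hw : w ≤ n) : ((n - w : ℕ) : ZMod n) = -(w : ZMod n) := by
  rw [Nat.cast_sub hw, ZMod.natCast_self]; ring

lemma eq_n_of_dvd (hn : 0 < n) {s : ℕ} (hdvd : n ∣ s) (h1 : 0 < s) (h2 : s < 2 * n) :
    s = n := by
  obtain ⟨c, rfl⟩ := hdvd
  have hc1 : 1 ≤ c := by
    by_contra hc; push_neg at hc
    interval_cases c <;> omega
  have hc2 : c < 2 := by
    by_contra hc; push_neg at hc
    nlinarith
  have : c = 1 := by omega
  rw [this, mul_one]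

lemma modeq_cases (hn : 0 < n) {x y : ℕ} (h : x ≡ y [MOD n]) (hy : y < n)
    (hx : x < 2 * n) : x = y ∨ x = y + n := by
  have h2 : x % n = y := by
    rw [Nat.ModEq] at h; rw [h, Nat.mod_eq_of_lt hy]
  rcases lt_or_ge x n with h3 | h3
  · left; rw [← h2, Nat.mod_eq_of_lt h3]
  · right
    have h4 : x - n < n := by omega
    have h5 : x % n = x - n := by
      rw [Nat.mod_eq_sub_mod h3, Nat.mod_eq_of_lt h4]
    omega

/-- nested arcs give disjoint edges -/
lemma disjoint_idx (hn : 0 < n) {a u v d : ℕ} (hu : 1 ≤ u) (huv : u < v) (hvd : v < d)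
    (hdn : d < n) :
    EdgesDisjoint s(gonPt n a, gonPt n (a + d)) s(gonPt n (a + u), gonPt n (a + v)) := by
  show edgeSeg _ ∩ edgeSeg _ = ∅
  rw [edgeSeg_mk, edgeSeg_mk, gonPt_eq_P, gonPt_eq_P, gonPt_eq_P, gonPt_eq_P]
  exact disjoint_of_nested (angle_lt hn (show a < a + u by omega))
    (angle_lt hn (show a + u < a + v by omega)).le
    (angle_lt hn (show a + v < a + d by omega))
    (angle_lt2 hn (show a + d < a + n by omega))

/-- crossing arcs give intersecting edges -/
lemma not_disjoint_cross (hn : 0 < n) {a u d v : ℕ} (hu : 1 ≤ u) (hud : u < d)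
    (hdv : d < v) (hvn : v < n) :
    ¬ EdgesDisjoint s(gonPt n a, gonPt n (a + d)) s(gonPt n (a + u), gonPt n (a + v)) := by
  intro h
  obtain ⟨p, hp1, hp2⟩ := inter_nonempty_of_crossing
    (angle_lt hn (show a < a + u by omega))
    (angle_lt hn (show a + u < a + d by omega))
    (angle_lt hn (show a + d < a + v by omega))
    (angle_lt2 hn (show a + v < a + n by omega))
  rw [EdgesDisjoint, edgeSeg_mk, edgeSeg_mk, gonPt_eq_P, gonPt_eq_P, gonPt_eq_P,
    gonPt_eq_P] at h
  exact (Set.eq_empty_iff_forall_notMem.1 h p) ⟨hp1, hp2⟩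

lemma mem_edges_intro {k : ℕ} (hn : 0 < n) (x d : ℕ)
    (hd1 : (n - k - 1) / 2 ≤ d) (hd2 : d ≤ (n + k + 1) / 2) (hdn : d < n) :
    s(gonPt n x, gonPt n (x + d)) ∈ (Gnk n k).edges := by
  apply Finset.mem_image.2
  refine ⟨(x % n, (x + d) % n), ?_, ?_⟩
  · apply Finset.mem_filter.2
    constructor
    · exact Finset.mem_product.2 ⟨Finset.mem_range.2 (Nat.mod_lt _ hn),
        Finset.mem_range.2 (Nat.mod_lt _ hn)⟩
    · have hle : x % n ≤ (x + d) % n + n := by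
        have := Nat.mod_lt x hn; omega
      have hv : ((x + d) % n + n - x % n) % n = d := by
        apply zeq hn (Nat.mod_lt _ hn) hdn
        rw [zmod_mod, Nat.cast_sub hle]
        push_cast [zmod_mod, ZMod.natCast_self]
        ring
      rw [hv]; exact ⟨hd1, hd2⟩
  · show s(gonPt n (x % n), gonPt n ((x + d) % n)) = _
    rw [← gonPt_mod hn x, ← gonPt_mod hn (x + d)]

lemma mem_edges_elim {k : ℕ} (hn : 0 < n) {e : Sym2 Pt} (he : e ∈ (Gnk n k).edges) :
    ∃ i d, i < n ∧ (n - k - 1) / 2 ≤ d ∧ d ≤ (n + k + 1) / 2 ∧ d < n ∧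
      e = s(gonPt n i, gonPt n (i + d)) := by
  obtain ⟨⟨p1, p2⟩, hp, rfl⟩ := Finset.mem_image.1 he
  obtain ⟨hmem, h1, h2⟩ := Finset.mem_filter.1 hp
  obtain ⟨hp1, hp2⟩ := Finset.mem_product.1 hmem
  rw [Finset.mem_range] at hp1 hp2
  refine ⟨p1, (p2 + n - p1) % n, hp1, h1, h2, Nat.mod_lt _ hn, ?_⟩
  have hg : gonPt n p2 = gonPt n (p1 + (p2 + n - p1) % n) := by
    rw [gonPt_eq_iff hn]
    push_cast [zmod_mod, Nat.cast_sub (show p1 ≤ p2 + n by omega), ZMod.natCast_self]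
    ring
  rw [← hg]

/-- the two-to-one map from quadruples to pairs of edges -/
def phi (n : ℕ) (q : ℕ × ℕ × ℕ × ℕ) : Sym2 (Sym2 Pt) :=
  s(s(gonPt n q.1, gonPt n (q.1 + q.2.2.2)),
    s(gonPt n (q.1 + q.2.1), gonPt n (q.1 + q.2.2.1)))

/-- the companion quadruple representing the same pair of edges -/
def twin (n : ℕ) (q : ℕ × ℕ × ℕ × ℕ) : ℕ × ℕ × ℕ × ℕ :=
  ((q.1 + q.2.2.1) % n, q.2.2.2 - q.2.2.1, n - q.2.2.1, n - (q.2.2.1 - q.2.1))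


lemma gon_add_n (hn : 0 < n) (x : ℕ) : gonPt n (x + n) = gonPt n x :=
  gonPt_congr hn (Nat.add_modEq_right)

lemma phi_mem_DJ {k m : ℕ} (hn : 0 < n) (hm : 1 ≤ m)
    (hA : (n - k - 1) / 2 = m) (hB : (n + k + 1) / 2 = n - m) (hmn : m + m ≤ n)
    {q : ℕ × ℕ × ℕ × ℕ} (hq : q ∈ SS n m) : phi n q ∈ DJpairs (Gnk n k) := by
  obtain ⟨a, u, v, d⟩ := q
  rw [mem_SS hm] at hq
  obtain ⟨ha, hd1, hd2, hu1, huv, hvd, hvu⟩ := hq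
  have hdn : d < n := by omega
  have he : s(gonPt n a, gonPt n (a + d)) ∈ (Gnk n k).edges :=
    mem_edges_intro hn a d (by omega) (by omega) hdn
  have hf' : s(gonPt n (a + u), gonPt n ((a + u) + (v - u))) ∈ (Gnk n k).edges :=
    mem_edges_intro hn _ _ (by omega) (by omega) (by omega)
  have heq : (a + u) + (v - u) = a + v := by omega
  rw [heq] at hf'
  show s(s(gonPt n a, gonPt n (a + d)), s(gonPt n (a + u), gonPt n (a + v))) ∈ _
  refine Finset.mem_filter.2 ⟨Finset.mk_mem_sym2_iff.2 ⟨he, hf'⟩, _, _, rfl, ?_⟩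
  exact disjoint_idx hn hu1 huv (by omega) hdn

lemma twin_mem {m : ℕ} (hn : 0 < n) (hm : 1 ≤ m) {q : ℕ × ℕ × ℕ × ℕ}
    (hq : q ∈ SS n m) : twin n q ∈ SS n m := by
  obtain ⟨a, u, v, d⟩ := q
  rw [mem_SS hm] at hq
  obtain ⟨ha, hd1, hd2, hu1, huv, hvd, hvu⟩ := hq
  show ((a + v) % n, d - v, n - v, n - (v - u)) ∈ SS n m
  rw [mem_SS hm]
  refine ⟨Nat.mod_lt _ hn, ?_, ?_, ?_, ?_, ?_, ?_⟩ <;> omega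

lemma phi_twin {m : ℕ} (hn : 0 < n) (hm : 1 ≤ m) {q : ℕ × ℕ × ℕ × ℕ}
    (hq : q ∈ SS n m) : phi n (twin n q) = phi n q := by
  obtain ⟨a, u, v, d⟩ := q
  rw [mem_SS hm] at hq
  obtain ⟨ha, hd1, hd2, hu1, huv, hvd, hvu⟩ := hq
  show s(s(gonPt n ((a + v) % n), gonPt n ((a + v) % n + (n - (v - u)))),
      s(gonPt n ((a + v) % n + (d - v)), gonPt n ((a + v) % n + (n - v)))) = _
  have e1 : gonPt n ((a + v) % n) = gonPt n (a + v) := (gonPt_mod hn _).symm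
  have e2 : gonPt n ((a + v) % n + (n - (v - u))) = gonPt n (a + u) := by
    apply gonPt_congr hn
    have m1 : (a + v) % n + (n - (v - u)) ≡ (a + v) + (n - (v - u)) [MOD n] :=
      Nat.ModEq.add_right _ (Nat.mod_modEq _ _)
    have m2 : (a + v) + (n - (v - u)) = (a + u) + n := by omega
    exact m1.trans (m2 ▸ Nat.add_modEq_right)
  have e3 : gonPt n ((a + v) % n + (d - v)) = gonPt n (a + d) := by
    apply gonPt_congr hn
    have m1 : (a + v) % n + (d - v) ≡ (a + v) + (d - v) [MOD n] :=
      Nat.ModEq.add_right _ (Nat.mod_modEq _ _)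
    have m2 : (a + v) + (d - v) = a + d := by omega
    exact m1.trans (m2 ▸ Nat.ModEq.refl _)
  have e4 : gonPt n ((a + v) % n + (n - v)) = gonPt n a := by
    apply gonPt_congr hn
    have m1 : (a + v) % n + (n - v) ≡ (a + v) + (n - v) [MOD n] :=
      Nat.ModEq.add_right _ (Nat.mod_modEq _ _)
    have m2 : (a + v) + (n - v) = a + n := by omega
    exact m1.trans (m2 ▸ Nat.add_modEq_right)
  rw [e1, e2, e3, e4]
  show s(s(gonPt n (a + v), gonPt n (a + u)), s(gonPt n (a + d), gonPt n a)) =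
    s(s(gonPt n a, gonPt n (a + d)), s(gonPt n (a + u), gonPt n (a + v)))
  rw [Sym2.eq_swap (a := gonPt n (a + v)), Sym2.eq_swap (a := gonPt n (a + d)),
    Sym2.eq_swap (a := s(gonPt n (a + u), gonPt n (a + v)))]

lemma twin_ne {m : ℕ} (hn : 0 < n) (hm : 1 ≤ m) {q : ℕ × ℕ × ℕ × ℕ}
    (hq : q ∈ SS n m) : twin n q ≠ q := by
  obtain ⟨a, u, v, d⟩ := q
  rw [mem_SS hm] at hq
  obtain ⟨ha, hd1, hd2, hu1, huv, hvd, hvu⟩ := hq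
  intro h
  have h1 : (a + v) % n = a := congrArg Prod.fst h
  have h2 : (a + v) % n = a % n := by rw [h1, Nat.mod_eq_of_lt ha]
  have h3 : v ≡ 0 [MOD n] := by
    have : a + v ≡ a + 0 [MOD n] := by rw [Nat.add_zero]; exact h2
    exact Nat.ModEq.add_left_cancel' a this
  have h4 : n ∣ v := Nat.modEq_zero_iff_dvd.1 h3
  have h5 : n ≤ v := Nat.le_of_dvd (by omega) h4
  omega

lemma phi_eq_cases {m : ℕ} (hn : 0 < n) (hm : 1 ≤ m) {q q' : ℕ × ℕ × ℕ × ℕ}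
    (hq : q ∈ SS n m) (hq' : q' ∈ SS n m) (h : phi n q' = phi n q) :
    q' = q ∨ q' = twin n q := by
  obtain ⟨a, u, v, d⟩ := q
  obtain ⟨a', u', v', d'⟩ := q'
  rw [mem_SS hm] at hq hq'
  obtain ⟨ha, hd1, hd2, hu1, huv, hvd, hvu⟩ := hq
  obtain ⟨ha', hd1', hd2', hu1', huv', hvd', hvu'⟩ := hq'
  have hdn : d < n := by omega
  have hun : u < n := by omega
  have hvn : v < n := by omega
  have hdn' : d' < n := by omega
  have hun' : u' < n := by omega
  have hvn' : v' < n := by omega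
  simp only [phi, Sym2.eq_iff] at h
  rcases h with ⟨(⟨h1, h2⟩ | ⟨h1, h2⟩), (⟨h3, h4⟩ | ⟨h3, h4⟩)⟩ |
    ⟨(⟨h1, h2⟩ | ⟨h1, h2⟩), (⟨h3, h4⟩ | ⟨h3, h4⟩)⟩ <;>
    rw [gonPt_eq_iff hn] at h1 h2 h3 h4 <;> push_cast at h1 h2 h3 h4
  -- case A1
  · have ea : a' = a := zeq hn ha' ha h1
    have ed : d' = d := zeq hn hdn' hdn (by linear_combination h2 - h1)
    have eu : u' = u := zeq hn hun' hun (by linear_combination h3 - h1)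
    have ev : v' = v := zeq hn hvn' hvn (by linear_combination h4 - h1)
    left; simp [ea, ed, eu, ev]
  -- case A2
  · exfalso
    have eu : u' = v := zeq hn hun' hvn (by linear_combination h3 - h1)
    have ev : v' = u := zeq hn hvn' hun (by linear_combination h4 - h1)
    omega
  -- case B1
  · exfalso
    have hdd : ((d + d' : ℕ) : ZMod n) = 0 := by push_cast; linear_combination h2 - h1
    have hddn : d + d' = n := eq_n_of_dvd hn (zdvd hn hdd) (by omega) (by omega)
    have h5 : ((d + u' : ℕ) : ZMod n) = ((u : ℕ) : ZMod n) := by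
      push_cast; linear_combination h3 - h1
    have h6 : d + u' = u := zeq hn (by omega) hun h5
    omega
  -- case B2
  · exfalso
    have hdd : ((d + d' : ℕ) : ZMod n) = 0 := by push_cast; linear_combination h2 - h1
    have hddn : d + d' = n := eq_n_of_dvd hn (zdvd hn hdd) (by omega) (by omega)
    have h5 : ((d + v' : ℕ) : ZMod n) = ((u : ℕ) : ZMod n) := by
      push_cast; linear_combination h4 - h1
    have h6 : d + v' = u := zeq hn (by omega) hun h5
    omega
  -- case C1 : e' = f (direct), f' = e (direct)
  · exfalso
    have h5 : ((u + u' : ℕ) : ZMod n) = 0 := by push_cast; linear_combination h3 - h1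
    have h6 : u + u' = n := eq_n_of_dvd hn (zdvd hn h5) (by omega) (by omega)
    have ed' : ((d' : ℕ) : ZMod n) = ((v - u : ℕ) : ZMod n) := by
      rw [Nat.cast_sub (le_of_lt huv)]; push_cast; linear_combination h2 - h1
    have hd'e : d' = v - u := zeq hn hdn' (by omega) ed'
    omega
  -- case C2
  · exfalso
    have ed' : ((d' : ℕ) : ZMod n) = ((v - u : ℕ) : ZMod n) := by
      rw [Nat.cast_sub (le_of_lt huv)]; push_cast; linear_combination h2 - h1
    have hd'e : d' = v - u := zeq hn hdn' (by omega) ed'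
    have h5 : ((u + v' : ℕ) : ZMod n) = 0 := by push_cast; linear_combination h4 - h1
    have h6 : u + v' = n := eq_n_of_dvd hn (zdvd hn h5) (by omega) (by omega)
    omega
  -- case D1 : e' = f (swapped), f' = e (direct)
  · exfalso
    have h5 : ((v + u' : ℕ) : ZMod n) = 0 := by push_cast; linear_combination h3 - h1
    have h6 : v + u' = n := eq_n_of_dvd hn (zdvd hn h5) (by omega) (by omega)
    have h7 : ((v + v' : ℕ) : ZMod n) = ((d : ℕ) : ZMod n) := by
      push_cast; linear_combination h4 - h1
    have h8 := modeq_cases hn ((ZMod.natCast_eq_natCast_iff _ _ _).1 h7) hdn (by omega)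
    omega
  -- case D2 : the twin
  · right
    have ea : a' = (a + v) % n := by
      apply zeq hn ha' (Nat.mod_lt _ hn)
      rw [zmod_mod]; push_cast; linear_combination h1
    have ed : d' = n - (v - u) := by
      apply zeq hn hdn' (by omega)
      rw [zsub (by omega : v - u ≤ n), Nat.cast_sub (le_of_lt huv)]
      push_cast; linear_combination h2 - h1
    have h5 : ((v + v' : ℕ) : ZMod n) = 0 := by push_cast; linear_combination h4 - h1
    have h6 : v + v' = n := eq_n_of_dvd hn (zdvd hn h5) (by omega) (by omega)
    have h7 : ((v + u' : ℕ) : ZMod n) = ((d : ℕ) : ZMod n) := by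
      push_cast; linear_combination h3 - h1
    have h8 := modeq_cases hn ((ZMod.natCast_eq_natCast_iff _ _ _).1 h7) hdn (by omega)
    have eu : u' = d - v := by omega
    have ev : v' = n - v := by omega
    show _ = ((a + v) % n, d - v, n - v, n - (v - u))
    simp [ea, ed, eu, ev]

lemma surj {k m : ℕ} (hn : 0 < n) (hm : 1 ≤ m)
    (hA : (n - k - 1) / 2 = m) (hB : (n + k + 1) / 2 = n - m) (hmn : m + m ≤ n)
    {t : Sym2 (Sym2 Pt)} (ht : t ∈ DJpairs (Gnk n k)) :
    ∃ q ∈ SS n m, phi n q = t := by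
  obtain ⟨hsym, e, f, heq, hdisj⟩ := Finset.mem_filter.1 ht
  subst heq
  obtain ⟨he, hf⟩ := Finset.mk_mem_sym2_iff.1 hsym
  obtain ⟨i, d, hi, hd1, hd2, hdn, rfl⟩ := mem_edges_elim hn he
  obtain ⟨j, g, hj, hg1, hg2, hgn, rfl⟩ := mem_edges_elim hn hf
  rw [hA] at hd1 hg1
  rw [hB] at hd2 hg2
  set u0 := (j + n - i) % n with hu0def
  set w0 := (j + g + n - i) % n with hw0def
  have hu0n : u0 < n := Nat.mod_lt _ hn
  have hw0n : w0 < n := Nat.mod_lt _ hn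
  have hu0z : ((u0 : ℕ) : ZMod n) = (j : ZMod n) - (i : ZMod n) := by
    rw [hu0def, zmod_mod, Nat.cast_sub (by omega)]
    push_cast [ZMod.natCast_self]; ring
  have hw0z : ((w0 : ℕ) : ZMod n) = (j : ZMod n) + (g : ZMod n) - (i : ZMod n) := by
    rw [hw0def, zmod_mod, Nat.cast_sub (by omega)]
    push_cast [ZMod.natCast_self]; ring
  have hu0 : gonPt n j = gonPt n (i + u0) := by
    rw [gonPt_eq_iff hn]; push_cast [hu0z]; ring
  have hw0 : gonPt n (j + g) = gonPt n (i + w0) := by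
    rw [gonPt_eq_iff hn]; push_cast [hw0z]; ring
  have hne_uw : u0 ≠ w0 := by
    intro h
    have hg0 : ((g : ℕ) : ZMod n) = 0 := by
      have : ((u0 : ℕ) : ZMod n) = ((w0 : ℕ) : ZMod n) := by rw [h]
      rw [hu0z, hw0z] at this
      linear_combination this.symm
    have := Nat.le_of_dvd (by omega) (zdvd hn hg0)
    omega
  -- exclude shared endpoints
  have hu00 : u0 ≠ 0 := by
    intro h
    rw [h, Nat.add_zero] at hu0
    exact not_disjoint_of_mem
      (by rw [edgeSeg_mk, ← hu0]; exact left_mem_segment ℝ _ _)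
      (by rw [edgeSeg_mk]; exact left_mem_segment ℝ _ _) hdisj
  have hu0d : u0 ≠ d := by
    intro h
    rw [h] at hu0
    exact not_disjoint_of_mem
      (by rw [edgeSeg_mk, ← hu0]; exact right_mem_segment ℝ _ _)
      (by rw [edgeSeg_mk]; exact left_mem_segment ℝ _ _) hdisj
  have hw00 : w0 ≠ 0 := by
    intro h
    rw [h, Nat.add_zero] at hw0
    exact not_disjoint_of_mem
      (by rw [edgeSeg_mk, ← hw0]; exact left_mem_segment ℝ _ _)
      (by rw [edgeSeg_mk]; exact right_mem_segment ℝ _ _) hdisj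
  have hw0d : w0 ≠ d := by
    intro h
    rw [h] at hw0
    exact not_disjoint_of_mem
      (by rw [edgeSeg_mk, ← hw0]; exact right_mem_segment ℝ _ _)
      (by rw [edgeSeg_mk]; exact right_mem_segment ℝ _ _) hdisj
  -- normalize the second edge
  obtain ⟨u, v, huv, hu1, hvn, hvd, hud, hm1, hm2, hff⟩ :
      ∃ u v, u < v ∧ 1 ≤ u ∧ v < n ∧ v ≠ d ∧ u ≠ d ∧ m ≤ v - u ∧ v - u ≤ n - m ∧
        s(gonPt n j, gonPt n (j + g)) = s(gonPt n (i + u), gonPt n (i + v)) := by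
    rcases lt_or_gt_of_ne hne_uw with hc | hc
    · refine ⟨u0, w0, hc, by omega, hw0n, hw0d, hu0d, ?_, ?_, by rw [hu0, hw0]⟩
      · have hz : ((w0 - u0 : ℕ) : ZMod n) = ((g : ℕ) : ZMod n) := by
          rw [Nat.cast_sub hc.le]; linear_combination hw0z - hu0z
        have : w0 - u0 = g := zeq hn (by omega) (by omega) hz
        omega
      · have hz : ((w0 - u0 : ℕ) : ZMod n) = ((g : ℕ) : ZMod n) := by
          rw [Nat.cast_sub hc.le]; linear_combination hw0z - hu0z
        have : w0 - u0 = g := zeq hn (by omega) (by omega) hz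
        omega
    · refine ⟨w0, u0, hc, by omega, hu0n, hu0d, hw0d, ?_, ?_,
        by rw [hu0, hw0, Sym2.eq_swap]⟩
      · have hz : ((u0 - w0 : ℕ) : ZMod n) = ((n - g : ℕ) : ZMod n) := by
          rw [Nat.cast_sub hc.le, zsub (by omega)]; linear_combination hu0z - hw0z
        have : u0 - w0 = n - g := zeq hn (by omega) (by omega) hz
        omega
      · have hz : ((u0 - w0 : ℕ) : ZMod n) = ((n - g : ℕ) : ZMod n) := by
          rw [Nat.cast_sub hc.le, zsub (by omega)]; linear_combination hu0z - hw0z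
        have : u0 - w0 = n - g := zeq hn (by omega) (by omega) hz
        omega
  rw [hff] at hdisj ⊢
  rcases lt_trichotomy v d with hvlt | hveq | hvgt
  · -- nested inside
    refine ⟨(i, u, v, d), ?_, ?_⟩
    · rw [mem_SS hm]; refine ⟨hi, by omega, by omega, hu1, huv, by omega, hm1⟩
    · rfl
  · exact absurd hveq hvd
  · rcases lt_trichotomy u d with hult | hueq | hugt
    · -- crossing
      exact absurd hdisj (not_disjoint_cross hn hu1 hult hvgt hvn)
    · exact absurd hueq hud
    · -- nested outside
      refine ⟨((i + d) % n, u - d, v - d, n - d), ?_, ?_⟩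
      · rw [mem_SS hm]
        exact ⟨Nat.mod_lt _ hn, by omega, by omega, by omega, by omega, by omega, by omega⟩
      · show s(s(gonPt n ((i + d) % n), gonPt n ((i + d) % n + (n - d))),
          s(gonPt n ((i + d) % n + (u - d)), gonPt n ((i + d) % n + (v - d)))) = _
        have e1 : gonPt n ((i + d) % n) = gonPt n (i + d) := (gonPt_mod hn _).symm
        have e2 : gonPt n ((i + d) % n + (n - d)) = gonPt n i := by
          apply gonPt_congr hn
          have m1 : (i + d) % n + (n - d) ≡ (i + d) + (n - d) [MOD n] :=
            Nat.ModEq.add_right _ (Nat.mod_modEq _ _)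
          have m2 : (i + d) + (n - d) = i + n := by omega
          exact m1.trans (m2 ▸ Nat.add_modEq_right)
        have e3 : gonPt n ((i + d) % n + (u - d)) = gonPt n (i + u) := by
          apply gonPt_congr hn
          have m1 : (i + d) % n + (u - d) ≡ (i + d) + (u - d) [MOD n] :=
            Nat.ModEq.add_right _ (Nat.mod_modEq _ _)
          have m2 : (i + d) + (u - d) = i + u := by omega
          exact m1.trans (m2 ▸ Nat.ModEq.refl _)
        have e4 : gonPt n ((i + d) % n + (v - d)) = gonPt n (i + v) := by
          apply gonPt_congr hn
          have m1 : (i + d) % n + (v - d) ≡ (i + d) + (v - d) [MOD n] :=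
            Nat.ModEq.add_right _ (Nat.mod_modEq _ _)
          have m2 : (i + d) + (v - d) = i + v := by omega
          exact m1.trans (m2 ▸ Nat.ModEq.refl _)
        rw [e1, e2, e3, e4, Sym2.eq_swap (a := gonPt n (i + d))]

end GnkAux

/-- For integers `n` and `k` of different parity with `n − 2 > k > 2`, the graph `G_{n,k}`
satisfies `|DJ(G_{n,k})| = (n/2)·C(k+2, 3)`. -/
theorem Gnk_card_DJpairs (n k : ℕ) (hk : 2 < k) (hn : k + 2 < n) (hp : n % 2 ≠ k % 2) :
    ((DJpairs (Gnk n k)).card : ℝ) = n / 2 * ((k + 2).choose 3) := by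
  have hn0 : 0 < n := by omega
  set m := (n - k - 1) / 2 with hmdef
  have hm : 1 ≤ m := by omega
  have hmn : m + m ≤ n := by omega
  have hA : (n - k - 1) / 2 = m := hmdef.symm
  have hB : (n + k + 1) / 2 = n - m := by omega
  have hch : n - 2 * m + 1 = k + 2 := by omega
  have H1 : ∀ q ∈ GnkAux.SS n m, GnkAux.phi n q ∈ DJpairs (Gnk n k) :=
    fun q hq => GnkAux.phi_mem_DJ hn0 hm hA hB hmn hq
  have hcard := Finset.card_eq_sum_card_fiberwise H1
  have Hfib : ∀ t ∈ DJpairs (Gnk n k),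
      ((GnkAux.SS n m).filter (fun q => GnkAux.phi n q = t)).card = 2 := by
    intro t ht
    obtain ⟨q, hq, rfl⟩ := GnkAux.surj hn0 hm hA hB hmn ht
    have hset : (GnkAux.SS n m).filter (fun r => GnkAux.phi n r = GnkAux.phi n q) =
        {q, GnkAux.twin n q} := by
      ext r
      simp only [Finset.mem_filter, Finset.mem_insert, Finset.mem_singleton]
      constructor
      · rintro ⟨hr, hphi⟩
        exact GnkAux.phi_eq_cases hn0 hm hq hr hphi
      · rintro (rfl | rfl)
        · exact ⟨hq, rfl⟩
        · exact ⟨GnkAux.twin_mem hn0 hm hq, GnkAux.phi_twin hn0 hm hq⟩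
    rw [hset, Finset.card_insert_of_notMem (by
        simp only [Finset.mem_singleton]
        exact fun h => (GnkAux.twin_ne hn0 hm hq) h.symm), Finset.card_singleton]
  have h2 : (GnkAux.SS n m).card = 2 * (DJpairs (Gnk n k)).card := by
    rw [hcard, Finset.sum_congr rfl Hfib, Finset.sum_const, smul_eq_mul, mul_comm]
  have h3 : (GnkAux.SS n m).card = n * (k + 2).choose 3 := by
    rw [GnkAux.card_SS hmn, hch]
  have h4 : 2 * (DJpairs (Gnk n k)).card = n * (k + 2).choose 3 := by omega
  have h5 := congrArg (Nat.cast : ℕ → ℝ) h4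
  push_cast at h5
  linarith

end
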